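/- Let L ≥ 2 be an integer, A ∈ ℝ^{M×N}, y ∈ ℝ^M. Suppose x^{(1)}, …, x^{(L)} : [0,∞) → ℝ^N are differentiable curves satisfying, for every k ∈ [L] and t ≥ 0, (x^{(k)})'(t) = −[Aᵀ(A(x^{(1)}(t) ⊙ ⋯ ⊙ x^{(L)}(t)) − y)] ⊙ (⊙_{j ≠ k} x^{(j)}(t)) (the negative gradient flow of L_over(x^{(1)},…,x^{(L)}) = ½‖A(x^{(1)} ⊙ ⋯ ⊙ x^{(L)}) − y‖₂² in the k-th factor). If x^{(k)}(0) = x^{(k')}(0) for all k, k' ∈ [L], then x^{(k)}(t) = x^{(k')}(t) for all k, k' ∈ [L] and all t ≥ 0, and the common curve x := x^{(1)} satisfies x'(t) = −[Aᵀ(A x(t)^{⊙L} − y)] ⊙ x(t)^{⊙(L−1)} for all t ≥ 0. -/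

import Mathlib

open Filter Topology Matrix

noncomputable section

theorem stmt5 {M N : ℕ} (L : ℕ) (hL : 2 ≤ L)
    (A : Matrix (Fin M) (Fin N) ℝ) (y : Fin M → ℝ)
    (X : Fin L → ℝ → Fin N → ℝ)
    (hflow : ∀ k : Fin L, ∀ t : ℝ, 0 ≤ t → ∀ i : Fin N,
      HasDerivAt (fun s => X k s i)
        (-(Matrix.mulVec Aᵀ (A.mulVec (fun j => ∏ l, X l t j) - y) i *
            ∏ l ∈ Finset.univ.erase k, X l t i)) t)
    (hinit : ∀ k k' : Fin L, X k 0 = X k' 0) :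
    (∀ k k' : Fin L, ∀ t : ℝ, 0 ≤ t → X k t = X k' t) ∧
    (∀ t : ℝ, 0 ≤ t → ∀ i : Fin N,
      HasDerivAt (fun s => X (⟨0, by omega⟩ : Fin L) s i)
        (-(Matrix.mulVec Aᵀ
            (A.mulVec (fun j => X (⟨0, by omega⟩ : Fin L) t j ^ L) - y) i *
            X (⟨0, by omega⟩ : Fin L) t i ^ (L - 1))) t) := by
  -- continuity of each coordinate curve on [0, ∞)
  have hc : ∀ l : Fin L, ∀ j : Fin N, ContinuousOn (fun t => X l t j) (Set.Ici (0:ℝ)) :=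
    fun l j t ht => ((hflow l t ht j).continuousAt).continuousWithinAt
  set g : ℝ → Fin N → ℝ :=
    fun t => Matrix.mulVec Aᵀ (A.mulVec (fun j => ∏ l, X l t j) - y) with hgdef
  have hgc : ∀ i : Fin N, ContinuousOn (fun t => g t i) (Set.Ici (0:ℝ)) := by
    intro i
    simp only [hgdef, Matrix.mulVec, dotProduct, Pi.sub_apply]
    apply continuousOn_finset_sum
    intro m _
    apply ContinuousOn.mul continuousOn_const
    apply ContinuousOn.sub _ continuousOn_const
    apply continuousOn_finset_sum
    intro j _
    exact continuousOn_const.mul (continuousOn_finset_prod _ fun l _ => hc l j)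
  -- main claim: all factors coincide for t ≥ 0
  have key : ∀ k k' : Fin L, ∀ t : ℝ, 0 ≤ t → ∀ i : Fin N, X k t i = X k' t i := by
    intro k k' t ht i
    rcases eq_or_ne k k' with rfl | hkk'
    · rfl
    -- coefficient of the linear ODE for the difference
    set c : ℝ → ℝ :=
      fun s => g s i * ∏ l ∈ (Finset.univ.erase k).erase k', X l s i with hcdef
    have hcc : ContinuousOn c (Set.Icc (0:ℝ) t) := by
      apply ContinuousOn.mono _ Set.Icc_subset_Ici_self
      exact (hgc i).mul (continuousOn_finset_prod _ fun l _ => hc l i)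
    obtain ⟨K, hK⟩ := IsCompact.exists_bound_of_continuousOn isCompact_Icc hcc
    set Knn : NNReal := Real.toNNReal K with hKnn
    set cb : ℝ → ℝ := fun s => c (min (max s 0) t) with hcbdef
    have hcb_mem : ∀ s : ℝ, min (max s 0) t ∈ Set.Icc (0:ℝ) t := fun s =>
      ⟨le_min (le_max_right s 0) ht, min_le_right _ _⟩
    have hcb_eq : ∀ s ∈ Set.Ico (0:ℝ) t, cb s = c s := by
      intro s hs
      simp [hcbdef, max_eq_left hs.1, min_eq_left hs.2.le]
    have hv : ∀ s : ℝ,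
        LipschitzOnWith Knn (fun x : ℝ => cb s * x) Set.univ := by
      intro s
      apply LipschitzWith.lipschitzOnWith
      apply LipschitzWith.of_dist_le_mul
      intro x y'
      have h1 : dist (cb s * x) (cb s * y') = |cb s| * dist x y' := by
        simp [Real.dist_eq, ← mul_sub, abs_mul]
      rw [h1]
      apply mul_le_mul_of_nonneg_right _ dist_nonneg
      calc |cb s| = ‖cb s‖ := rfl
        _ ≤ K := hK _ (hcb_mem s)
        _ ≤ Knn := Real.le_coe_toNNReal K
    set u : ℝ → ℝ := fun s => X k s i - X k' s i with hudef
    have hk'mem : k' ∈ Finset.univ.erase k := by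
      simp [Finset.mem_erase, Ne.symm hkk']
    have hkmem : k ∈ Finset.univ.erase k' := by
      simp [Finset.mem_erase, hkk']
    have hu' : ∀ s ∈ Set.Ico (0:ℝ) t, HasDerivWithinAt u (cb s * u s) (Set.Ici s) s := by
      intro s hs
      have h1 := hflow k s hs.1 i
      have h2 := hflow k' s hs.1 i
      have hsum := h1.sub h2
      have hval : -(g s i * ∏ l ∈ Finset.univ.erase k, X l s i) -
          -(g s i * ∏ l ∈ Finset.univ.erase k', X l s i) = cb s * u s := by
        rw [← Finset.mul_prod_erase _ _ hk'mem, ← Finset.mul_prod_erase _ _ hkmem]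
        rw [show (Finset.univ.erase k').erase k = (Finset.univ.erase k).erase k' from
          Finset.erase_right_comm]
        rw [hcb_eq s hs]
        ring
      rw [hval] at hsum
      exact hsum.hasDerivWithinAt
    have hz' : ∀ s ∈ Set.Ico (0:ℝ) t,
        HasDerivWithinAt (fun _ : ℝ => (0:ℝ)) (cb s * (fun _ : ℝ => (0:ℝ)) s) (Set.Ici s) s := by
      intro s _
      simpa using (hasDerivWithinAt_const s (Set.Ici s) (0:ℝ))
    have hcont : ContinuousOn u (Set.Icc (0:ℝ) t) :=
      ((hc k i).sub (hc k' i)).mono Set.Icc_subset_Ici_self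
    have hu0 : u 0 = (fun _ : ℝ => (0:ℝ)) 0 := by
      simp [hudef, congrFun (hinit k k') i]
    have := ODE_solution_unique_of_mem_Icc_right (fun s _ => hv s) hcont hu'
      (fun s _ => Set.mem_univ _) continuousOn_const hz' (fun s _ => Set.mem_univ _) hu0
    have hut : u t = 0 := this (Set.mem_Icc.2 ⟨ht, le_refl t⟩)
    exact sub_eq_zero.1 hut
  refine ⟨fun k k' t ht => funext (key k k' t ht), ?_⟩
  intro t ht i
  set z : Fin L := (⟨0, by omega⟩ : Fin L) with hz
  have hall : ∀ l : Fin L, ∀ j : Fin N, X l t j = X z t j := fun l j => key l z t ht j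
  have h := hflow z t ht i
  have e1 : (fun j => ∏ l, X l t j) = (fun j => X z t j ^ L) := by
    funext j
    rw [Finset.prod_congr rfl fun l _ => hall l j, Finset.prod_const]
    simp
  have e2 : ∏ l ∈ Finset.univ.erase z, X l t i = X z t i ^ (L - 1) := by
    rw [Finset.prod_congr rfl fun l _ => hall l i, Finset.prod_const,
      Finset.card_erase_of_mem (Finset.mem_univ z)]
    simp
  rw [e1, e2] at h
  exact h
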